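/- arXiv:2511.20638 — 2 statements merged into one kernel-verified Lean document; each statement's English description precedes it below -/
import Mathlib

section
/- Let X be a first-countable topological space written as a disjoint union X = X₁ ∪ X₂. Assume that for every convergent sequence (xⱼ) contained in X₁, the set of limit points of (xⱼ) intersected with X₂ has no isolated points. Then for every subset S of X that is locally closed (an intersection of an open and a closed set) and Hausdorff in the subspace topology, the set S ∩ X₁ is relatively closed in S. -/
/-- If `X = X₁ ⊔ X₂` is first countable and for every convergent sequence
contained in `X₁` the set of its cluster points lying in `X₂` has no isolated points,
then for every locally closed subset `S` of `X` that is Hausdorff in the subspace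
topology, `S ∩ X₁` is relatively closed in `S`. -/
theorem statement0 {X : Type*} [TopologicalSpace X] [FirstCountableTopology X]
    (X₁ X₂ : Set X) (hdisj : Disjoint X₁ X₂) (hunion : X₁ ∪ X₂ = Set.univ)
    (hcond : ∀ x : ℕ → X, (∀ j, x j ∈ X₁) →
      (∃ l, Filter.Tendsto x Filter.atTop (nhds l)) →
      ∀ y ∈ {p | MapClusterPt p Filter.atTop x} ∩ X₂,
        y ∈ closure (({p | MapClusterPt p Filter.atTop x} ∩ X₂) \ {y}))
    (S : Set X) (hS : IsLocallyClosed S) (hHaus : T2Space S) :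
    IsClosed {p : S | (p : X) ∈ X₁} := by
  obtain ⟨U, F, hU, hF, hUF⟩ := hS
  rw [← closure_subset_iff_isClosed]
  intro ss hss
  by_contra hss1
  have hs2 : (ss : X) ∈ X₂ := by
    have h := Set.mem_univ (ss : X)
    rw [← hunion] at h
    exact h.resolve_left hss1
  obtain ⟨x', hx'mem, hx'lim⟩ := mem_closure_iff_seq_limit.mp hss
  set x : ℕ → X := fun j => (x' j : X) with hxdef
  have hx1 : ∀ j, x j ∈ X₁ := hx'mem
  have hxS : ∀ j, x j ∈ S := fun j => (x' j).2
  have hxF : ∀ j, x j ∈ F := fun j => (hUF.le (hxS j)).2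
  have hxlim : Filter.Tendsto x Filter.atTop (nhds (ss : X)) :=
    (continuous_subtype_val.tendsto ss).comp hx'lim
  have hscl : MapClusterPt (ss : X) Filter.atTop x := hxlim.mapClusterPt
  have hkey := hcond x hx1 ⟨_, hxlim⟩ (ss : X) ⟨hscl, hs2⟩
  have hUss : (ss : X) ∈ U := (hUF.le ss.2).1
  obtain ⟨y, hyU, ⟨⟨hycl, hy2⟩, hyne⟩⟩ := mem_closure_iff.mp hkey U hU hUss
  have hyne' : y ≠ (ss : X) := hyne
  have hyF : y ∈ F := by
    have h1 : ClusterPt y (Filter.principal F) :=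
      ClusterPt.mono hycl (Filter.le_principal_iff.mpr (Filter.mem_map.mpr
        (Filter.univ_mem' hxF)))
    have := mem_closure_iff_clusterPt.mpr h1
    rwa [hF.closure_eq] at this
  have hyS : y ∈ S := hUF.ge ⟨hyU, hyF⟩
  set ys : S := ⟨y, hyS⟩ with hysdef
  have hclS : MapClusterPt ys Filter.atTop x' := by
    rw [mapClusterPt_iff_frequently]
    intro t ht
    rw [nhds_subtype] at ht
    obtain ⟨V, hV, hVt⟩ := ht
    exact (mapClusterPt_iff_frequently.mp hycl V hV).mono fun j hj => hVt hj
  have hle : Filter.map x' Filter.atTop ≤ nhds ss := hx'lim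
  have hne : (nhds ys ⊓ nhds ss).NeBot := ClusterPt.mono hclS hle
  have : ys = ss := t2_iff_nhds.mp hHaus hne
  exact hyne' (congrArg Subtype.val this)
end

section
/- Let g be a finite-dimensional real Lie algebra possessing an abelian ideal a of codimension 1. Then every coadjoint orbit of g has dimension at most 2; equivalently, for every ξ ∈ g*, the stabilizer subalgebra g(ξ) = {x ∈ g : ξ([x, g]) = 0} has codimension at most 2 in g. -/
/-- The stabilizer (radical of the bilinear form `(x,y) ↦ ξ ⁅x,y⁆`) of `ξ ∈ g*`. -/
def coadjointStabilizer {L : Type*} [LieRing L] [LieAlgebra ℝ L]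
    (ξ : Module.Dual ℝ L) : Submodule ℝ L where
  carrier := {x : L | ∀ y : L, ξ ⁅x, y⁆ = 0}
  add_mem' := by
    intro a b ha hb y
    rw [add_lie, map_add, ha y, hb y, add_zero]
  zero_mem' := by
    intro y
    rw [zero_lie, map_zero]
  smul_mem' := by
    intro c a ha y
    rw [smul_lie, map_smul, ha y, smul_zero]

/-- If a finite-dimensional real Lie algebra `g` has an abelian ideal of
codimension 1, then every coadjoint orbit has dimension at most 2; equivalently, for every
`ξ ∈ g*` the stabilizer `g(ξ) = {x | ξ([x,g]) = 0}` has codimension at most 2. -/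
theorem statement7 {L : Type*} [LieRing L] [LieAlgebra ℝ L] [FiniteDimensional ℝ L]
    (a : LieIdeal ℝ L) (habelian : ∀ x y : L, x ∈ a → y ∈ a → ⁅x, y⁆ = 0)
    (hcodim : Module.finrank ℝ a + 1 = Module.finrank ℝ L) :
    ∀ ξ : Module.Dual ℝ L,
      Module.finrank ℝ L ≤ Module.finrank ℝ (coadjointStabilizer ξ) + 2 := by
  intro ξ
  set A : Submodule ℝ L := a.toSubmodule with hA
  have hArank : Module.finrank ℝ A + 1 = Module.finrank ℝ L := hcodim
  -- A ≠ ⊤, so pick e ∉ A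
  have hAne : A ≠ ⊤ := by
    intro h
    rw [h, finrank_top] at hArank
    omega
  obtain ⟨e, he⟩ : ∃ e : L, e ∉ A := by
    by_contra h
    push_neg at h
    exact hAne (Submodule.eq_top_iff'.2 h)
  -- A ⊔ span e = ⊤
  have hsup : A ⊔ Submodule.span ℝ {e} = ⊤ := by
    apply Submodule.eq_top_of_finrank_eq
    have hlt : A < A ⊔ Submodule.span ℝ {e} := by
      refine lt_of_le_of_ne le_sup_left ?_
      intro h
      apply he
      rw [h]
      exact Submodule.mem_sup_right (Submodule.mem_span_singleton_self e)
    have h1 : Module.finrank ℝ A < Module.finrank ℝ (A ⊔ Submodule.span ℝ {e} : Submodule ℝ L) :=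
      Submodule.finrank_lt_finrank_of_lt hlt
    have h2 : Module.finrank ℝ (A ⊔ Submodule.span ℝ {e} : Submodule ℝ L) ≤ Module.finrank ℝ L :=
      Submodule.finrank_le _
    omega
  -- the linear functional x ↦ ξ ⁅x, e⁆ on A
  let f : A →ₗ[ℝ] ℝ :=
    { toFun := fun x => ξ ⁅(x : L), e⁆
      map_add' := by intro x y; simp [add_lie]
      map_smul' := by intro c x; simp [smul_lie] }
  set K : Submodule ℝ A := LinearMap.ker f with hK
  have hKrank : Module.finrank ℝ A ≤ Module.finrank ℝ K + 1 := by
    have := LinearMap.finrank_range_add_finrank_ker f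
    have hr : Module.finrank ℝ (LinearMap.range f) ≤ 1 := by
      simpa using Submodule.finrank_le (LinearMap.range f)
    rw [hK]
    omega
  -- K maps into the stabilizer
  have hsub : K.map A.subtype ≤ coadjointStabilizer ξ := by
    rintro x ⟨⟨x, hxA⟩, hxK, rfl⟩
    intro y
    have hy : y ∈ A ⊔ Submodule.span ℝ {e} := hsup ▸ Submodule.mem_top
    obtain ⟨z, hz, w, hw, rfl⟩ := Submodule.mem_sup.1 hy
    obtain ⟨c, rfl⟩ := Submodule.mem_span_singleton.1 hw
    have hxz : ⁅x, z⁆ = 0 := habelian x z hxA hz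
    have hxe : ξ ⁅x, e⁆ = 0 := hxK
    simp only [Submodule.subtype_apply]
    rw [lie_add, lie_smul, hxz, zero_add, map_smul, smul_eq_mul, hxe, mul_zero]
  have hmaprank : Module.finrank ℝ (K.map A.subtype) = Module.finrank ℝ K :=
    (LinearEquiv.finrank_eq
      (Submodule.equivMapOfInjective A.subtype (Submodule.injective_subtype A) K)).symm
  have hfin : Module.finrank ℝ (K.map A.subtype) ≤ Module.finrank ℝ (coadjointStabilizer ξ) :=
    Submodule.finrank_mono hsub
  omega
end
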